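/- Let B be the APC iteration matrix with γ ∈ (0, 2) and m ≥ 2, and let μ_1,…,μ_n be the eigenvalues of the real symmetric matrix X. Then the spectral radius of B (the maximum modulus of its complex eigenvalues) equals the maximum of |1−γ| and max over i = 1,…,n of the maximum modulus of the complex roots of p_{μ_i}(λ) = λ² + (γ + η − 2 − ηγ(1−μ_i)) λ + (γ−1)(η−1). -/

import Mathlib

open Matrix

lemma eigen_iff {k : Type*} [Fintype k] [DecidableEq k] (N : Matrix k k ℂ) (c : ℂ) :
    c ∈ spectrum ℂ N ↔ ∃ x : k → ℂ, x ≠ 0 ∧ N *ᵥ x = c • x := by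
  rw [spectrum.mem_iff, Matrix.isUnit_iff_isUnit_det, isUnit_iff_ne_zero, not_not,
    ← Matrix.exists_mulVec_eq_zero_iff]
  have key : ∀ v, (algebraMap ℂ (Matrix k k ℂ) c - N) *ᵥ v = c • v - N *ᵥ v := by
    intro v
    rw [Matrix.sub_mulVec, Matrix.algebraMap_eq_diagonal]
    congr 1
    ext j
    simp [Matrix.mulVec, dotProduct, diagonal, Finset.sum_ite_eq, Pi.algebraMap_apply,
      Algebra.algebraMap_self_apply]
  constructor
  · rintro ⟨v, hv, h⟩
    exact ⟨v, hv, by rw [key v, sub_eq_zero] at h; exact h.symm⟩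
  · rintro ⟨v, hv, h⟩
    exact ⟨v, hv, by rw [key v, h, sub_self]⟩

lemma spec_eq {n m : ℕ} (hn : 0 < n) (hm : 2 ≤ m)
    (g e : ℂ) (Pc : Fin m → Matrix (Fin n) (Fin n) ℂ) (Xc : Matrix (Fin n) (Fin n) ℂ)
    (hsum : ∑ i, Pc i = (m : ℂ) • (1 - Xc))
    (μ : Fin n → ℂ)
    (hμ1 : ∀ (c : ℂ) (v : Fin n → ℂ), v ≠ 0 → Xc *ᵥ v = c • v → ∃ i, c = μ i)
    (hμ2 : ∀ i, ∃ v : Fin n → ℂ, v ≠ 0 ∧ Xc *ᵥ v = μ i • v)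
    (Bc : Matrix (Fin m × Fin n ⊕ Fin n) (Fin m × Fin n ⊕ Fin n) ℂ)
    (hBc : Bc = Matrix.fromBlocks
        ((1 - g) • 1) (fun q j => g * Pc q.1 q.2 j)
        (fun j q => (e * (1 - g) / m) * (1 : Matrix (Fin n) (Fin n) ℂ) j q.2)
        ((e * g / (m : ℂ)) • ∑ i, Pc i + (1 - e) • 1)) :
    spectrum ℂ Bc = {1 - g} ∪ {z : ℂ | ∃ i,
      z^2 + (g + e - 2 - e*g*(1 - μ i))*z + (g-1)*(e-1) = 0} := by
  have hm0 : (m : ℂ) ≠ 0 := Nat.cast_ne_zero.mpr (by omega)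
  set Mc : Matrix (Fin n) (Fin n) ℂ := (e * g / (m : ℂ)) • ∑ i, Pc i + (1 - e) • 1 with hMc
  have key : ∀ (u : Fin m × Fin n → ℂ) (v : Fin n → ℂ),
      (∀ q, (Bc *ᵥ Sum.elim u v) (Sum.inl q) = (1-g) * u q + g * (Pc q.1 *ᵥ v) q.2) ∧
      (∀ j, (Bc *ᵥ Sum.elim u v) (Sum.inr j)
        = (e * (1-g) / m) * ∑ i, u (i, j) + (Mc *ᵥ v) j) := by
    intro u v
    subst hBc
    constructor
    · intro q
      simp only [Matrix.mulVec, dotProduct, Fintype.sum_sum_type, Sum.elim_inl,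
        Sum.elim_inr, Matrix.fromBlocks, Matrix.of_apply, Matrix.fromBlocks_apply₁₁, Matrix.fromBlocks_apply₁₂, Matrix.smul_apply,
        Matrix.one_apply, smul_eq_mul, mul_ite, mul_one, mul_zero, ite_mul, zero_mul]
      rw [Finset.sum_ite_eq (Finset.univ) q (fun x => (1-g) * u x)]
      simp [Finset.mul_sum, mul_assoc]
    · intro j
      simp only [Matrix.mulVec, dotProduct, Fintype.sum_sum_type, Sum.elim_inl,
        Sum.elim_inr, Matrix.fromBlocks, Matrix.of_apply, Matrix.fromBlocks_apply₂₁, Matrix.fromBlocks_apply₂₂, Matrix.one_apply,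
        mul_ite, mul_one, mul_zero, ite_mul, zero_mul]
      rw [Fintype.sum_prod_type]
      simp only [Finset.sum_ite_eq Finset.univ j, Finset.mem_univ, if_true]
      rw [← Finset.mul_sum]
  have hSv : ∀ (v : Fin n → ℂ) (j), ((∑ i, Pc i) *ᵥ v) j = m * (v j - (Xc *ᵥ v) j) := by
    intro v j
    rw [hsum, Matrix.smul_mulVec, Matrix.sub_mulVec, Matrix.one_mulVec]
    simp [smul_eq_mul, mul_sub]
  have keyM : ∀ (v : Fin n → ℂ) (j), (Mc *ᵥ v) j
      = e * g * (v j - (Xc *ᵥ v) j) + (1 - e) * v j := by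
    intro v j
    rw [hMc, Matrix.add_mulVec, Matrix.smul_mulVec, Matrix.smul_mulVec,
      Matrix.one_mulVec]
    have := hSv v j
    simp only [Pi.add_apply, Pi.smul_apply, smul_eq_mul, this]
    field_simp
  have pident : ∀ (z c : ℂ), z^2 + (g + e - 2 - e*g*(1 - c))*z + (g-1)*(e-1)
      = (z+g-1)*(z+e-1) - e*g*z*(1-c) := by intros; ring
  -- (1 - g) is an eigenvalue
  have hone : (1 - g) ∈ spectrum ℂ Bc := by
    rw [eigen_iff]
    have h01 : (⟨0, by omega⟩ : Fin m) ≠ ⟨1, by omega⟩ := by simp [Fin.ext_iff]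
    set u : Fin m × Fin n → ℂ := fun q =>
      ((if q.1 = (⟨0, by omega⟩ : Fin m) then 1 else 0)
        - (if q.1 = (⟨1, by omega⟩ : Fin m) then 1 else 0)) * (if q.2 = (⟨0, hn⟩ : Fin n) then 1 else 0) with hu
    refine ⟨Sum.elim u 0, ?_, ?_⟩
    · intro h0
      have := congrFun h0 (Sum.inl (⟨0, by omega⟩, ⟨0, hn⟩))
      simp [hu, h01] at this
    · ext y
      cases y with
      | inl q =>
        rw [(key u 0).1 q]
        simp [Matrix.mulVec_zero]
      | inr j =>
        rw [(key u 0).2 j]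
        have : ∑ i, u (i, j) = 0 := by
          simp only [hu]
          simp [sub_mul, ite_mul, one_mul, zero_mul, Finset.sum_sub_distrib,
            Finset.sum_ite_eq' Finset.univ]
        simp [this, Matrix.mulVec_zero]
  have hPsum : ∀ v : Fin n → ℂ, (∑ i, Pc i) *ᵥ v = ∑ i, Pc i *ᵥ v := fun v =>
    map_sum (Matrix.mulVec.addMonoidHomLeft v) _ _
  have hroot : ∀ z : ℂ, z ≠ 1 - g →
      (∃ i, z^2 + (g + e - 2 - e*g*(1 - μ i))*z + (g-1)*(e-1) = 0) → z ∈ spectrum ℂ Bc := by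
    rintro z hzne ⟨i, hi⟩
    have hlam : z + g - 1 ≠ 0 := by intro h; exact hzne (by linear_combination h)
    obtain ⟨v, hv0, hv⟩ := hμ2 i
    set u : Fin m × Fin n → ℂ := fun q => (g / (z + g - 1)) * (Pc q.1 *ᵥ v) q.2 with hu
    rw [eigen_iff]
    refine ⟨Sum.elim u v, ?_, ?_⟩
    · intro h0
      apply hv0; ext j; exact congrFun h0 (Sum.inr j)
    · ext y
      cases y with
      | inl q =>
        rw [(key u v).1 q]
        simp only [Sum.elim_inl, Pi.smul_apply, smul_eq_mul, hu]
        field_simp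
        ring
      | inr j =>
        rw [(key u v).2 j, keyM]
        have hXj : (Xc *ᵥ v) j = μ i * v j := by rw [hv]; simp
        have hsumu : ∑ i', u (i', j) = (g / (z + g - 1)) * (m * (v j - (Xc *ᵥ v) j)) := by
          simp only [hu]
          rw [← Finset.mul_sum, ← hSv v j, hPsum, Finset.sum_apply]
        rw [hsumu, hXj]
        simp only [Sum.elim_inr, Pi.smul_apply, smul_eq_mul]
        field_simp
        linear_combination (-1 : ℂ) * v j * hi
  have hfwd : ∀ z ∈ spectrum ℂ Bc, z ≠ 1 - g →
      ∃ i, z^2 + (g + e - 2 - e*g*(1 - μ i))*z + (g-1)*(e-1) = 0 := by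
    intro z hz hzne
    have hlam : z + g - 1 ≠ 0 := by intro h; exact hzne (by linear_combination h)
    obtain ⟨x, hx0, hx⟩ := (eigen_iff Bc z).mp hz
    set u : Fin m × Fin n → ℂ := fun q => x (Sum.inl q) with hu
    set v : Fin n → ℂ := fun j => x (Sum.inr j) with hv
    have hxe : x = Sum.elim u v := by ext y; cases y <;> rfl
    rw [hxe] at hx
    have htop : ∀ q, (1-g) * u q + g * (Pc q.1 *ᵥ v) q.2 = z * u q := by
      intro q
      have h1 := congrFun hx (Sum.inl q)
      rw [(key u v).1 q] at h1
      simpa using h1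
    have hu' : ∀ q, u q = (g / (z + g - 1)) * (Pc q.1 *ᵥ v) q.2 := by
      intro q
      rw [div_mul_eq_mul_div, eq_div_iff hlam]
      linear_combination (-1 : ℂ) * htop q
    have hv0 : v ≠ 0 := by
      intro h0
      apply hx0
      rw [hxe]
      ext y
      cases y with
      | inl q => simp [hu' q, h0, Matrix.mulVec_zero]
      | inr j => simp [h0]
    have hbot : ∀ j, (e*(1-g)/m) * ((g/(z+g-1)) * (m * (v j - (Xc *ᵥ v) j)))
        + (e * g * (v j - (Xc *ᵥ v) j) + (1-e) * v j) = z * v j := by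
      intro j
      have h1 := congrFun hx (Sum.inr j)
      rw [(key u v).2 j, keyM] at h1
      have hsumu : ∑ i', u (i', j) = (g/(z+g-1)) * (m * (v j - (Xc *ᵥ v) j)) := by
        simp only [hu']
        rw [← Finset.mul_sum, ← hSv v j, hPsum, Finset.sum_apply]
      rw [hsumu] at h1
      simpa using h1
    have heq : ∀ j, (e*g*z) * (Xc *ᵥ v) j = (e*g*z - (z+g-1)*(z+e-1)) * v j := by
      intro j
      have h1 := hbot j
      field_simp at h1
      refine mul_left_cancel₀ hm0 ?_
      linear_combination (-(m : ℂ)) * h1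
    by_cases hegz : e * g * z = 0
    · obtain ⟨j, hj⟩ := Function.ne_iff.mp hv0
      simp only [Pi.zero_apply] at hj
      have hd : e*g*z - (z+g-1)*(z+e-1) = 0 := by
        have h2 := heq j
        rw [hegz, zero_mul] at h2
        rcases mul_eq_zero.mp h2.symm with h | h
        · linear_combination h + hegz
        · exact absurd h hj
      exact ⟨⟨0, hn⟩, by
        rw [pident]
        linear_combination (-1:ℂ) * hd + μ ⟨0,hn⟩ * hegz⟩
    · have hXv : Xc *ᵥ v = ((e*g*z - (z+g-1)*(z+e-1))/(e*g*z)) • v := by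
        ext j
        rw [Pi.smul_apply, smul_eq_mul, div_mul_eq_mul_div, eq_div_iff hegz]
        linear_combination heq j
      obtain ⟨i, hi⟩ := hμ1 _ v hv0 hXv
      rw [div_eq_iff hegz] at hi
      refine ⟨i, ?_⟩
      rw [pident]
      linear_combination (-1 : ℂ) * hi
  ext z
  simp only [Set.mem_union, Set.mem_singleton_iff, Set.mem_setOf_eq]
  constructor
  · intro hz
    by_cases h : z = 1 - g
    · exact Or.inl h
    · exact Or.inr (hfwd z hz h)
  · rintro (rfl | hr)
    · exact hone
    · by_cases h : z = 1 - g
      · exact h ▸ hone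
      · exact hroot z h hr


lemma herm_spec {n : ℕ} {X : Matrix (Fin n) (Fin n) ℝ} (hXh : X.IsHermitian) :
    (∀ (c : ℂ) (v : Fin n → ℂ), v ≠ 0 → X.map (algebraMap ℝ ℂ) *ᵥ v = c • v →
      ∃ i, c = (hXh.eigenvalues i : ℂ)) ∧
    (∀ i : Fin n, ∃ v : Fin n → ℂ, v ≠ 0 ∧
      X.map (algebraMap ℝ ℂ) *ᵥ v = (hXh.eigenvalues i : ℂ) • v) := by
  set f := algebraMap ℝ ℂ
  set U : Matrix (Fin n) (Fin n) ℝ := (hXh.eigenvectorUnitary : Matrix (Fin n) (Fin n) ℝ) with hU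
  set Uc := U.map f with hUc
  set Sc := (star U).map f with hSc
  set Dc : Matrix (Fin n) (Fin n) ℂ := diagonal (fun j => (hXh.eigenvalues j : ℂ)) with hDc
  have hSU : Sc * Uc = 1 := by
    rw [hSc, hUc, ← Matrix.map_mul, Matrix.mem_unitaryGroup_iff'.mp (hXh.eigenvectorUnitary).2,
      Matrix.map_one f (map_zero f) (map_one f)]
  have hUS : Uc * Sc = 1 := by
    rw [hSc, hUc, ← Matrix.map_mul, Matrix.mem_unitaryGroup_iff.mp (hXh.eigenvectorUnitary).2,
      Matrix.map_one f (map_zero f) (map_one f)]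
  have hXc : X.map f = Uc * Dc * Sc := by
    conv_lhs => rw [hXh.spectral_theorem, Unitary.conjStarAlgAut_apply]
    rw [Matrix.map_mul, Matrix.map_mul]
    congr 1
    congr 1
    rw [Matrix.diagonal_map (map_zero f)]
    congr 1
  constructor
  · intro c v hv hXv
    set w := Sc *ᵥ v with hw
    have hvw : Uc *ᵥ w = v := by
      rw [hw, Matrix.mulVec_mulVec, hUS, Matrix.one_mulVec]
    have hwne : w ≠ 0 := by
      intro h0
      rw [h0, Matrix.mulVec_zero] at hvw
      exact hv hvw.symm
    have heig : Dc *ᵥ w = c • w := by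
      have : Sc *ᵥ (X.map f *ᵥ v) = Sc *ᵥ (c • v) := by rw [hXv]
      rw [Matrix.mulVec_smul] at this
      rw [hXc, Matrix.mulVec_mulVec, ← Matrix.mul_assoc, ← Matrix.mul_assoc, hSU,
        Matrix.one_mul, ← Matrix.mulVec_mulVec] at this
      exact this
    obtain ⟨j, hj⟩ : ∃ j, w j ≠ 0 := Function.ne_iff.mp hwne
    refine ⟨j, ?_⟩
    have := congrFun heig j
    rw [Matrix.mulVec_diagonal] at this
    simp only [Pi.smul_apply, smul_eq_mul] at this
    exact (mul_right_cancel₀ hj (this.symm))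
  · intro i
    refine ⟨Uc *ᵥ Pi.single i 1, ?_, ?_⟩
    · intro h0
      have : Sc *ᵥ (Uc *ᵥ Pi.single i 1) = 0 := by rw [h0, Matrix.mulVec_zero]
      rw [Matrix.mulVec_mulVec, hSU, Matrix.one_mulVec] at this
      have := congrFun this i
      simp at this
    · rw [hXc, Matrix.mulVec_mulVec, Matrix.mul_assoc (Uc * Dc), hSU, Matrix.mul_one,
        ← Matrix.mulVec_mulVec, Matrix.diagonal_mulVec_single, mul_one]
      ext j
      simp [Matrix.mulVec_single, mul_comm]


/-- For `γ ∈ (0,2)` and `m ≥ 2`, the spectral radius of the APC iteration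
matrix `B` equals the maximum of `|1−γ|` and the maximal modulus, over the eigenvalues
`μ_i` of `X`, of the complex roots of
`p_{μ_i}(λ) = λ² + (γ+η−2−ηγ(1−μ_i))λ + (γ−1)(η−1)`. -/
theorem apc_iteration_matrix_spectral_radius
    {n p m : ℕ} (hn : 0 < n) (hm : 2 ≤ m)
    (A : Fin m → Matrix (Fin p) (Fin n) ℝ)
    (hfr : ∀ i, Invertible (A i * (A i)ᵀ))
    (γ η : ℝ) (hγ : 0 < γ) (hγ' : γ < 2)
    (P : Fin m → Matrix (Fin n) (Fin n) ℝ)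
    (hP : ∀ i, P i = 1 - (A i)ᵀ * (A i * (A i)ᵀ)⁻¹ * A i)
    (X : Matrix (Fin n) (Fin n) ℝ)
    (hX : X = ((m : ℝ))⁻¹ • ∑ i, (A i)ᵀ * (A i * (A i)ᵀ)⁻¹ * A i)
    (hXh : X.IsHermitian)
    (M : Matrix (Fin n) (Fin n) ℝ)
    (hM : M = (η * γ / m) • ∑ i, P i + (1 - η) • (1 : Matrix (Fin n) (Fin n) ℝ))
    (B : Matrix (Fin m × Fin n ⊕ Fin n) (Fin m × Fin n ⊕ Fin n) ℝ)
    (hB : B = Matrix.fromBlocks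
        ((1 - γ) • (1 : Matrix (Fin m × Fin n) (Fin m × Fin n) ℝ))
        (fun q j => γ * P q.1 q.2 j)
        (fun j q => (η * (1 - γ) / m) * (1 : Matrix (Fin n) (Fin n) ℝ) j q.2)
        M) :
    sSup {r : ℝ | ∃ z ∈ spectrum ℂ (B.map (algebraMap ℝ ℂ)), ‖z‖ = r}
      = max |1 - γ|
          (sSup {r : ℝ | ∃ i : Fin n, ∃ z : ℂ,
            z ^ 2
              + ((γ : ℂ) + (η : ℂ) - 2 - (η : ℂ) * (γ : ℂ) * (1 - (hXh.eigenvalues i : ℂ))) * z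
              + ((γ : ℂ) - 1) * ((η : ℂ) - 1) = 0 ∧ ‖z‖ = r}) := by
  have hm0R : (m:ℝ) ≠ 0 := Nat.cast_ne_zero.mpr (by omega)
  set f := algebraMap ℝ ℂ with hf
  set g : ℂ := (γ : ℂ) with hg
  set e : ℂ := (η : ℂ) with he
  set μ : Fin n → ℂ := fun i => (hXh.eigenvalues i : ℂ) with hμ
  have hQ : ∑ i, (A i)ᵀ * (A i * (A i)ᵀ)⁻¹ * A i = (m:ℝ) • X := by
    rw [hX, smul_smul, mul_inv_cancel₀ hm0R, one_smul]
  have hsumR : ∑ i, P i = (m:ℝ) • (1 - X) := by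
    calc ∑ i, P i = ∑ i : Fin m, ((1 : Matrix (Fin n) (Fin n) ℝ)
          - (A i)ᵀ * (A i * (A i)ᵀ)⁻¹ * A i) := Finset.sum_congr rfl fun i _ => hP i
      _ = (m:ℝ) • (1 - X) := by
          rw [Finset.sum_sub_distrib, hQ, Finset.sum_const, Finset.card_univ, Fintype.card_fin,
            smul_sub]
          congr 1
          exact (Nat.cast_smul_eq_nsmul ℝ m (1 : Matrix (Fin n) (Fin n) ℝ)).symm
  have hsum : ∑ i, (P i).map f = (m:ℂ) • (1 - X.map f) := by
    ext j k
    have h2 : (∑ i, P i) j k = ((m:ℝ) • (1 - X)) j k := by rw [hsumR]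
    simp only [Matrix.sum_apply, Matrix.smul_apply, Matrix.sub_apply, Matrix.one_apply,
      smul_eq_mul] at h2
    simp only [Matrix.sum_apply, Matrix.map_apply, Matrix.smul_apply, Matrix.sub_apply,
      Matrix.one_apply, smul_eq_mul, ← map_sum, hf, Complex.coe_algebraMap]
    split_ifs with hjk
    · rw [if_pos hjk] at h2; exact_mod_cast h2
    · rw [if_neg hjk] at h2; exact_mod_cast h2
  have hBcEq : B.map f = Matrix.fromBlocks
      ((1 - g) • 1) (fun q j => g * ((P q.1).map f) q.2 j)
      (fun j q => (e * (1 - g) / (m:ℂ)) * (1 : Matrix (Fin n) (Fin n) ℂ) j q.2)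
      ((e * g / (m : ℂ)) • ∑ i, (P i).map f + (1 - e) • 1) := by
    subst hB hM
    ext y z
    cases y with
    | inl q =>
      cases z with
      | inl q' =>
        simp only [Matrix.map_apply, Matrix.fromBlocks, Matrix.of_apply, Sum.elim_inl, Sum.elim_inr, Matrix.fromBlocks_apply₁₁, Matrix.smul_apply,
          Matrix.one_apply, smul_eq_mul, hf, hg, Complex.coe_algebraMap]
        push_cast
        try split_ifs
        all_goals (try push_cast)
        all_goals ring
      | inr j =>
        simp only [Matrix.map_apply, Matrix.fromBlocks, Matrix.of_apply, Sum.elim_inl, Sum.elim_inr, Matrix.fromBlocks_apply₁₂, hf, hg, Complex.coe_algebraMap]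
        push_cast
        ring
    | inr j =>
      cases z with
      | inl q =>
        simp only [Matrix.map_apply, Matrix.fromBlocks, Matrix.of_apply, Sum.elim_inl, Sum.elim_inr, Matrix.fromBlocks_apply₂₁, Matrix.one_apply, hf, hg, he, Complex.coe_algebraMap]
        push_cast
        try split_ifs
        all_goals (try push_cast)
        all_goals ring
      | inr k =>
        simp only [Matrix.map_apply, Matrix.fromBlocks, Matrix.of_apply, Sum.elim_inl, Sum.elim_inr, Matrix.fromBlocks_apply₂₂, Matrix.add_apply,
          Matrix.smul_apply, Matrix.sum_apply, Matrix.one_apply, smul_eq_mul, hf, hg, he,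
          ← map_sum, Complex.coe_algebraMap]
        push_cast
        try split_ifs
        all_goals (try push_cast)
        all_goals ring
  have hspec := spec_eq hn hm g e (fun i => (P i).map f) (X.map f) hsum μ
      (herm_spec hXh).1 (herm_spec hXh).2 (B.map f) hBcEq
  set R : Set ℂ := {z : ℂ | ∃ i,
      z^2 + (g + e - 2 - e*g*(1 - μ i))*z + (g-1)*(e-1) = 0} with hR
  have hnormg : ‖(1:ℂ) - g‖ = |1 - γ| := by
    rw [show (1:ℂ) - g = ((1-γ:ℝ):ℂ) by push_cast; ring]
    rw [Complex.norm_real, Real.norm_eq_abs]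
  have hLset : {r : ℝ | ∃ z ∈ spectrum ℂ (B.map f), ‖z‖ = r}
      = insert |1-γ| (norm '' R) := by
    rw [hspec]
    ext r
    simp only [Set.mem_setOf_eq, Set.mem_union, Set.mem_singleton_iff, Set.mem_insert_iff,
      Set.mem_image]
    constructor
    · rintro ⟨z, (rfl|hz), rfl⟩
      · exact Or.inl hnormg
      · exact Or.inr ⟨z, hz, rfl⟩
    · rintro (rfl | ⟨z, hz, rfl⟩)
      · exact ⟨1-g, Or.inl rfl, hnormg⟩
      · exact ⟨z, Or.inr hz, rfl⟩
  have hRset : {r : ℝ | ∃ i : Fin n, ∃ z : ℂ,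
      z ^ 2 + ((γ : ℂ) + (η : ℂ) - 2 - (η : ℂ) * (γ : ℂ) * (1 - (hXh.eigenvalues i : ℂ))) * z
        + ((γ : ℂ) - 1) * ((η : ℂ) - 1) = 0 ∧ ‖z‖ = r} = norm '' R := by
    ext r
    simp only [Set.mem_setOf_eq, Set.mem_image, hR]
    constructor
    · rintro ⟨i, z, h1, h2⟩
      exact ⟨z, ⟨i, h1⟩, h2⟩
    · rintro ⟨z, ⟨i, h1⟩, h2⟩
      exact ⟨i, z, h1, h2⟩
  have hpne : ∀ i : Fin n, (Polynomial.X^2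
      + Polynomial.C (g + e - 2 - e*g*(1 - μ i)) * Polynomial.X
      + Polynomial.C ((g-1)*(e-1))) ≠ 0 := by
    intro i h
    have h2 := congrArg (fun q => Polynomial.coeff q 2) h
    simp only [Polynomial.coeff_add, Polynomial.coeff_X_pow, Polynomial.coeff_C_mul,
      Polynomial.coeff_X, Polynomial.coeff_C, Polynomial.coeff_zero] at h2
    norm_num at h2
  have hRfin : R.Finite := by
    refine Set.Finite.subset (Set.finite_iUnion (fun i : Fin n =>
      Polynomial.finite_setOf_isRoot (hpne i))) ?_
    intro z hz
    obtain ⟨i, hi⟩ := hz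
    refine Set.mem_iUnion.mpr ⟨i, ?_⟩
    simp only [Set.mem_setOf_eq, Polynomial.IsRoot, Polynomial.eval_add, Polynomial.eval_mul,
      Polynomial.eval_pow, Polynomial.eval_X, Polynomial.eval_C]
    exact hi
  have hRne : R.Nonempty := by
    set b : ℂ := g + e - 2 - e*g*(1 - μ ⟨0,hn⟩) with hb
    obtain ⟨s, hs⟩ := IsAlgClosed.exists_pow_nat_eq (k := ℂ) (b^2 - 4*((g-1)*(e-1)))
      (n := 2) (by norm_num)
    refine ⟨(-b + s)/2, ⟨⟨0,hn⟩, ?_⟩⟩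
    rw [← hb]
    have hz : ((-b+s)/2)^2 + b*((-b+s)/2) + (g-1)*(e-1)
        = (s^2 - (b^2 - 4*((g-1)*(e-1))))/4 := by ring
    rw [hz, hs, sub_self, zero_div]
  rw [hLset, hRset, Set.insert_eq,
    csSup_union bddAbove_singleton (Set.singleton_nonempty _)
      (hRfin.image _).bddAbove (hRne.image _),
    csSup_singleton]
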